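/- Let n ≥ 1, let a : ZMod n → R be a function into a commutative ring, and let P_0 be the 2n×2n block matrix fromBlocks 0 A (−Aᵀ) 0 with A(k,j) = a(k)δ_{k,j} − a(k)δ_{k,j-1} (indices mod n). Let C = ∏_i a(i) and let dC be the column vector whose first n entries are ∂C/∂a_k = ∏_{i≠k} a(i) and whose last n entries are 0. Then P_0 · dC = 0. -/
import Mathlib


open Matrix Finset

/-- `C = ∏ a_i` is a Casimir of the linear Poisson structure `P₀` of the
closed Toda lattice in Flaschka coordinates: `P₀ · dC = 0`. -/
theorem stmt_14 {R : Type*} [CommRing R] (n : ℕ) [NeZero n]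
    (a : ZMod n → R) (A : Matrix (ZMod n) (ZMod n) R)
    (hA : ∀ k j, A k j =
      a k * (if k = j then 1 else 0) - a k * (if k = j - 1 then 1 else 0)) :
    (fromBlocks 0 A (-Aᵀ) 0) *ᵥ
      (Sum.elim (fun k => ∏ i ∈ Finset.univ.erase k, a i) (0 : ZMod n → R)) = 0 := by
  rw [fromBlocks_mulVec]
  funext x
  cases x with
  | inl i => simp
  | inr j =>
    simp only [Sum.elim_comp_inl, Sum.elim_comp_inr, mulVec_zero, add_zero, neg_mulVec, Sum.elim_inl, Sum.elim_inr,
      Pi.neg_apply, neg_eq_zero, Pi.zero_apply, Matrix.zero_mulVec]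
    have hm : (Aᵀ *ᵥ fun k => ∏ i ∈ Finset.univ.erase k, a i) j
        = ∑ k, A k j * ∏ i ∈ Finset.univ.erase k, a i := by
      simp [mulVec, dotProduct, transpose_apply]
    rw [hm]
    calc ∑ k, A k j * ∏ i ∈ Finset.univ.erase k, a i
        = ∑ k, ((if k = j then a k * ∏ i ∈ Finset.univ.erase k, a i else 0)
              - (if k = j - 1 then a k * ∏ i ∈ Finset.univ.erase k, a i else 0)) := by
          refine Finset.sum_congr rfl fun k _ => ?_
          rw [hA]
          by_cases h1 : k = j <;> by_cases h2 : k = j - 1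
          · simp only [if_pos h1, if_pos h2]; ring
          · simp only [if_pos h1, if_neg h2]; ring
          · simp only [if_neg h1, if_pos h2]; ring
          · simp only [if_neg h1, if_neg h2]; ring
      _ = a j * ∏ i ∈ Finset.univ.erase j, a i
            - a (j - 1) * ∏ i ∈ Finset.univ.erase (j - 1), a i := by
          rw [Finset.sum_sub_distrib, Finset.sum_ite_eq', Finset.sum_ite_eq']
          simp
      _ = 0 := by
          rw [Finset.mul_prod_erase _ a (Finset.mem_univ j),
            Finset.mul_prod_erase _ a (Finset.mem_univ (j - 1)), sub_self]
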